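/- Let (Y_t)_{t≥0} be a real-valued stochastic process on a probability space whose sample paths are càdlàg (right-continuous with left limits), and let Y_∞ be a real random variable on the same space. If for every fixed s > 0 the sequence (Y_{ns})_{n∈ℕ} converges in distribution to Y_∞ as n → ∞ through the positive integers, then Y_t converges in distribution to Y_∞ as t → ∞ through the reals. (Lemma 5.1 of the paper, convergence-in-distribution version.) -/

import Mathlib

open MeasureTheory Filter Set
open scoped ENNReal Topology ProbabilityTheory BoundedContinuousFunction

/-- Croft–Kingman lemma: if `g` is right-continuous on `[0, ∞)` and `g (n * s) → L` for every
`s > 0`, then `g t → L` as `t → ∞`. -/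
lemma croft_kingman (g : ℝ → ℝ) (L : ℝ)
    (hrc : ∀ t : ℝ, 0 ≤ t → ContinuousWithinAt g (Set.Ici t) t)
    (h : ∀ s : ℝ, 0 < s → Tendsto (fun n : ℕ => g (n * s)) atTop (𝓝 L)) :
    Tendsto g atTop (𝓝 L) := by
  rw [Metric.tendsto_atTop]
  intro ε hε
  have hε' : 0 < ε / 2 := by positivity
  set F : ℕ → Set ℝ := fun N => {s | 1 ≤ s ∧ ∀ n : ℕ, N ≤ n → |g (n * s) - L| ≤ ε / 2} with hF
  have hcover : ∀ s : ℝ, 1 ≤ s → ∃ N, s ∈ F N := by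
    intro s hs
    have hs0 : (0 : ℝ) < s := lt_of_lt_of_le one_pos hs
    obtain ⟨N, hN⟩ := (Metric.tendsto_atTop.mp (h s hs0)) (ε / 2) hε'
    exact ⟨N, hs, fun n hn => by
      have := hN n hn
      rw [Real.dist_eq] at this
      exact this.le⟩
  set H : ℕ → Set ℝ := fun N => closure (F N) ∪ Set.Iic 1 with hH
  have hHclosed : ∀ N, IsClosed (H N) := fun N => isClosed_closure.union isClosed_Iic
  have hHcover : ⋃ N, H N = Set.univ := by
    rw [Set.eq_univ_iff_forall]
    intro x
    rcases le_or_gt x 1 with hx | hx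
    · exact Set.mem_iUnion.mpr ⟨0, Or.inr hx⟩
    · obtain ⟨N, hN⟩ := hcover x hx.le
      exact Set.mem_iUnion.mpr ⟨N, Or.inl (subset_closure hN)⟩
  have hdense := dense_iUnion_interior_of_closed hHclosed hHcover
  obtain ⟨x, hxmem, hx1⟩ := hdense.exists_mem_open isOpen_Ioi (Set.nonempty_Ioi (a := (1:ℝ)))
  rw [Set.mem_iUnion] at hxmem
  obtain ⟨N, hxN⟩ := hxmem
  rw [Set.mem_Ioi] at hx1
  -- get a ball inside H N
  rw [mem_interior_iff_mem_nhds, Metric.mem_nhds_iff] at hxN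
  obtain ⟨δ, hδ, hball⟩ := hxN
  set δ' : ℝ := min δ (x - 1) with hδ'def
  have hδ' : 0 < δ' := lt_min hδ (by linarith)
  have hmin1 : δ' ≤ δ := min_le_left _ _
  have hmin2 : δ' ≤ x - 1 := min_le_right _ _
  set b : ℝ := x + δ' / 2 with hbdef
  have hab : x < b := by show x < x + δ' / 2; linarith
  have ha0 : 0 < x := lt_trans one_pos hx1
  have hb0 : 0 < b := lt_trans ha0 hab
  have hIoo : Set.Ioo x b ⊆ closure (F N) := by
    intro y hy
    have hy1 : x < y := hy.1
    have hy2 : y < x + δ' / 2 := hy.2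
    have hyH : y ∈ H N := by
      apply hball
      rw [Metric.mem_ball, Real.dist_eq, abs_sub_lt_iff]
      constructor
      · linarith
      · linarith
    rcases hyH with h1 | h1
    · exact h1
    · exfalso; rw [Set.mem_Iic] at h1; linarith
  -- choose threshold
  refine ⟨max ((N : ℝ) * b) (x * b / (b - x)) + 1, fun t ht => ?_⟩
  have htNb : (N : ℝ) * b + 1 ≤ t :=
    le_trans (add_le_add_left (le_max_left _ _) 1) ht
  have htab : x * b / (b - x) + 1 ≤ t :=
    le_trans (add_le_add_left (le_max_right _ _) 1) ht
  have ht0 : 0 < t := by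
    have : (0:ℝ) ≤ (N : ℝ) * b := by positivity
    linarith
  -- find the integer n
  set n : ℕ := ⌊t / b⌋₊ + 1 with hndef
  have htb0 : 0 ≤ t / b := by positivity
  have hn1 : t / b < (n : ℝ) := by
    push_cast [hndef]
    exact Nat.lt_floor_add_one _
  have hn2 : (n : ℝ) ≤ t / b + 1 := by
    push_cast [hndef]
    linarith [Nat.floor_le htb0]
  have hn0 : (0 : ℝ) < n := lt_of_le_of_lt htb0 hn1
  have hnN : N ≤ n := by
    have hNr : (N : ℝ) ≤ t / b := by
      rw [le_div_iff₀ hb0]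
      linarith
    exact_mod_cast (hNr.trans_lt hn1).le
  have htn_lt_b : t / (n : ℝ) < b := by
    rw [div_lt_iff₀ hn0]
    calc t = t / b * b := (div_mul_cancel₀ t hb0.ne').symm
    _ < (n : ℝ) * b := mul_lt_mul_of_pos_right hn1 hb0
    _ = b * (n : ℝ) := mul_comm _ _
  have ha_lt_tn : x < t / (n : ℝ) := by
    rw [lt_div_iff₀ hn0]
    have hba : 0 < b - x := by linarith
    have h1 : x * (n : ℝ) ≤ x * (t / b + 1) := mul_le_mul_of_nonneg_left hn2 ha0.le
    have h2 : x * (t / b + 1) < t := by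
      have key : x * b / (b - x) < t := by linarith
      rw [div_lt_iff₀ hba] at key
      rw [← sub_pos]
      have hexp : t - x * (t / b + 1) = (t * (b - x) - x * b) / b := by
        field_simp
        ring
      rw [hexp]
      exact div_pos (by linarith) hb0
    linarith
  -- density argument: t is in the closure of S
  set S : Set ℝ := {u | t < u ∧ |g u - L| ≤ ε / 2} with hSdef
  have htS : t ∈ closure S := by
    set sn : ℝ := t / (n : ℝ) with hsndef
    have hKsub : Set.Ioo sn b ⊆ closure (F N ∩ Set.Ioo sn b) := by
      intro y hy
      have : y ∈ closure (F N) ∩ Set.Ioo sn b :=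
        ⟨hIoo ⟨lt_trans ha_lt_tn hy.1, hy.2⟩, hy⟩
      exact (IsOpen.closure_inter isOpen_Ioo) this
    have hsn_cl : sn ∈ closure (F N ∩ Set.Ioo sn b) := by
      have h1 : sn ∈ closure (Set.Ioo sn b) := by
        rw [closure_Ioo (ne_of_lt htn_lt_b)]
        exact ⟨le_refl _, htn_lt_b.le⟩
      have h2 := closure_mono hKsub h1
      rwa [closure_closure] at h2
    have hmul : (n : ℝ) * sn = t := by
      rw [hsndef, mul_div_cancel₀ _ hn0.ne']
    have himg : (fun s : ℝ => (n : ℝ) * s) '' (F N ∩ Set.Ioo sn b) ⊆ S := by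
      rintro _ ⟨s, ⟨hsF, hsI⟩, rfl⟩
      constructor
      · rw [← hmul]
        exact mul_lt_mul_of_pos_left hsI.1 hn0
      · exact hsF.2 n hnN
    have hcont : Continuous (fun s : ℝ => (n : ℝ) * s) := continuous_const.mul continuous_id
    have hmem : t ∈ (fun s : ℝ => (n : ℝ) * s) '' closure (F N ∩ Set.Ioo sn b) :=
      ⟨sn, hsn_cl, hmul⟩
    exact closure_mono himg (image_closure_subset_closure_image hcont hmem)
  -- conclude by right-continuity
  have hne : (𝓝[S] t).NeBot := mem_closure_iff_nhdsWithin_neBot.mp htS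
  have htend : Tendsto g (𝓝[S] t) (𝓝 (g t)) :=
    (hrc t ht0.le).mono_left (nhdsWithin_mono t (fun u hu => hu.1.le))
  have habs : Tendsto (fun u => |g u - L|) (𝓝[S] t) (𝓝 (|g t - L|)) :=
    (continuous_abs.tendsto _).comp (htend.sub_const L)
  have hle : |g t - L| ≤ ε / 2 :=
    le_of_tendsto habs (eventually_mem_nhdsWithin.mono fun u hu => hu.2)
  rw [Real.dist_eq]
  linarith

/-- Lemma 5.1 of the paper (convergence-in-distribution version): if a real-valued process
with càdlàg paths satisfies `Y_{ns} → Y_∞` in distribution along the integers for every fixed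
`s > 0`, then `Y_t → Y_∞` in distribution as `t → ∞` through the reals. -/
theorem stmt2 {Ω : Type*} [MeasureSpace Ω] [IsProbabilityMeasure (ℙ : Measure Ω)]
    (Y : ℝ → Ω → ℝ) (Yinf : Ω → ℝ)
    (hmeas : ∀ t : ℝ, 0 ≤ t → Measurable (Y t)) (hinfmeas : Measurable Yinf)
    -- right-continuity of the paths at every `t ≥ 0`
    (hrc : ∀ ω, ∀ t : ℝ, 0 ≤ t → ContinuousWithinAt (fun s => Y s ω) (Set.Ici t) t)
    -- existence of finite left limits of the paths at every `t > 0`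
    (hll : ∀ ω, ∀ t : ℝ, 0 < t →
      ∃ l : ℝ, Tendsto (fun s => Y s ω) (𝓝[Set.Ico 0 t] t) (𝓝 l))
    -- convergence in distribution along every arithmetic sequence
    (hconv : ∀ s : ℝ, 0 < s → ∀ f : ℝ →ᵇ ℝ,
      Tendsto (fun n : ℕ => ∫ ω, f (Y (n * s) ω) ∂ℙ) atTop (𝓝 (∫ ω, f (Yinf ω) ∂ℙ))) :
    ∀ f : ℝ →ᵇ ℝ,
      Tendsto (fun t : ℝ => ∫ ω, f (Y t ω) ∂ℙ) atTop (𝓝 (∫ ω, f (Yinf ω) ∂ℙ)) := by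
  intro f
  apply croft_kingman (fun t => ∫ ω, f (Y t ω) ∂ℙ) (∫ ω, f (Yinf ω) ∂ℙ)
  · intro t ht
    have : Tendsto (fun u => ∫ ω, f (Y u ω) ∂ℙ) (𝓝[Set.Ici t] t)
        (𝓝 (∫ ω, f (Y t ω) ∂ℙ)) := by
      apply tendsto_integral_filter_of_dominated_convergence (fun _ => ‖f‖)
      · filter_upwards [self_mem_nhdsWithin] with u hu
        exact (f.continuous.measurable.comp (hmeas u (le_trans ht hu))).aestronglyMeasurable
      · filter_upwards with u
        filter_upwards with ω
        exact f.norm_coe_le_norm _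
      · exact integrable_const _
      · filter_upwards with ω
        exact ((f.continuous.tendsto _).comp (hrc ω t ht))
    exact this
  · intro s hs
    exact hconv s hs f
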